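/- Let F, F' be n-step isotropic flags in F_q^{2r} and define the refinement F_{i,j} = F_{i-1} + (F_i ∩ F'_j) for 1 ≤ i,j ≤ N = 2n+1. Then the resulting chain of subspaces, ordered lexicographically in (i,j), forms an isotropic partial flag: each F_{i,j} with (i-1)N + j ≤ n(N+1) is isotropic, and (F_{i,j})^⊥ = F_{N+1-i, N-j} for the appropriate complementary indices. -/

import Mathlib

/-- The hyperbolic symmetric bilinear form `⟨x,y⟩ = ∑ i, x i * y (rev i)` on `K^{2r}`. -/
def formJ {K : Type*} [CommRing K] {m : ℕ} (x y : Fin m → K) : K :=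
  ∑ i, x i * y i.rev

/-- An `n`-step isotropic flag in `K^{2r}` (extended to `N = 2n+1` steps):
`0 = F_0 ⊆ F_1 ⊆ ⋯ ⊆ F_N = K^{2r}` with `F_{N-i} = F_i^⊥` for `i ≤ n`. -/
structure IsotropicFlag (K : Type*) [Field K] (n r : ℕ) where
  F : ℕ → Submodule K (Fin (2 * r) → K)
  bot : F 0 = ⊥
  top : F (2 * n + 1) = ⊤
  mono : Monotone F
  perp : ∀ i ≤ n, ((F (2 * n + 1 - i) : Set (Fin (2 * r) → K)))
    = {x | ∀ y ∈ F i, formJ x y = 0}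

/-- The refinement `F_{i,j} = F_{i-1} + (F_i ∩ F'_j)` (1-based indices `i, j`). -/
def refineStep {K : Type*} [Field K] {n r : ℕ} (Fl Fl' : IsotropicFlag K n r)
    (i j : ℕ) : Submodule K (Fin (2 * r) → K) :=
  Fl.F (i - 1) ⊔ (Fl.F i ⊓ Fl'.F j)

namespace RefineAux

variable {K : Type*} [Field K] {m : ℕ}

lemma formJ_comm (x y : Fin m → K) : formJ x y = formJ y x := by
  unfold formJ
  rw [← Equiv.sum_comp (Fin.revPerm (n := m)) (fun i => y i * x i.rev)]
  simp [mul_comm]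

lemma formJ_add_left (x x' y : Fin m → K) :
    formJ (x + x') y = formJ x y + formJ x' y := by
  simp [formJ, add_mul, Finset.sum_add_distrib]

def bilinJ (K : Type*) [Field K] (m : ℕ) : LinearMap.BilinForm K (Fin m → K) :=
  LinearMap.mk₂ K formJ
    (fun x x' y => by simp [formJ, add_mul, Finset.sum_add_distrib])
    (fun c x y => by simp [formJ, Finset.mul_sum, mul_assoc])
    (fun x y y' => by simp [formJ, mul_add, Finset.sum_add_distrib])
    (fun c x y => by simp [formJ, Finset.mul_sum, mul_left_comm])

@[simp] lemma bilinJ_apply (x y : Fin m → K) : bilinJ K m x y = formJ x y := rfl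

lemma bilinJ_refl : (bilinJ K m).IsRefl := by
  intro x y h
  simpa [formJ_comm y x] using h

lemma bilinJ_nondeg : (bilinJ K m).Nondegenerate := by
  refine (LinearMap.IsRefl.nondegenerate_iff_separatingLeft (B := bilinJ K m) (bilinJ_refl : LinearMap.IsRefl (bilinJ K m))).mpr ?_
  intro x hx
  funext i
  have h := hx (Pi.single i.rev 1)
  simp only [bilinJ_apply, formJ, Pi.single_apply, Fin.rev_inj, mul_ite, mul_one,
    mul_zero, Finset.sum_ite_eq', Finset.mem_univ, if_true] at h
  simpa using h

lemma orthogonal_sup {V : Type*} [AddCommGroup V] [Module K V] (B : LinearMap.BilinForm K V)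
    (U W : Submodule K V) : B.orthogonal (U ⊔ W) = B.orthogonal U ⊓ B.orthogonal W := by
  refine le_antisymm (le_inf (B.orthogonal_le le_sup_left) (B.orthogonal_le le_sup_right)) ?_
  intro x hx y hy
  rcases Submodule.mem_sup.mp hy with ⟨u, hu, w, hw, rfl⟩
  have h1 : B u x = 0 := hx.1 u hu
  have h2 : B w x = 0 := hx.2 w hw
  show B (u + w) x = 0
  rw [map_add, LinearMap.add_apply, h1, h2, add_zero]

lemma orth_coe (W : Submodule K (Fin m → K)) :
    (((bilinJ K m).orthogonal W : Submodule K (Fin m → K)) : Set (Fin m → K))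
      = {x | ∀ y ∈ W, formJ x y = 0} := by
  ext x
  simp only [SetLike.mem_coe, LinearMap.BilinForm.mem_orthogonal_iff,
    LinearMap.BilinForm.IsOrtho, bilinJ_apply, Set.mem_setOf_eq]
  constructor <;> intro h y hy <;> rw [formJ_comm] <;> exact h y hy

variable {n r : ℕ}

lemma flag_orth (Fl : IsotropicFlag K n r) {i : ℕ} (hi : i ≤ 2 * n + 1) :
    (bilinJ K (2 * r)).orthogonal (Fl.F i) = Fl.F (2 * n + 1 - i) := by
  rcases le_or_gt i n with h | h
  · exact SetLike.coe_injective (by rw [orth_coe, ← Fl.perp i h])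
  · set k := 2 * n + 1 - i with hk
    have hkn : k ≤ n := by omega
    have h1 : Fl.F i = (bilinJ K (2 * r)).orthogonal (Fl.F k) := by
      apply SetLike.coe_injective
      rw [orth_coe]
      have : i = 2 * n + 1 - k := by omega
      rw [this, Fl.perp k hkn]
    rw [h1, LinearMap.BilinForm.orthogonal_orthogonal bilinJ_nondeg bilinJ_refl]

/-- `F_{n+1}` pairs to zero with `F_n`. -/
lemma pair_zero (Fl : IsotropicFlag K n r) {x y : Fin (2 * r) → K}
    (hx : x ∈ Fl.F (n + 1)) (hy : y ∈ Fl.F n) : formJ x y = 0 := by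
  have hs := Fl.perp n le_rfl
  have hx' : x ∈ Fl.F (2 * n + 1 - n) := by
    have : n + 1 = 2 * n + 1 - n := by omega
    exact this ▸ hx
  have : x ∈ {x : Fin (2 * r) → K | ∀ y ∈ Fl.F n, formJ x y = 0} := hs ▸ hx'
  exact this y hy

lemma isotropic_Fn (Fl : IsotropicFlag K n r) {x y : Fin (2 * r) → K}
    (hx : x ∈ Fl.F n) (hy : y ∈ Fl.F n) : formJ x y = 0 :=
  pair_zero Fl (Fl.mono (Nat.le_succ n) hx) hy

lemma formJ_add_right (x y y' : Fin m → K) :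
    formJ x (y + y') = formJ x y + formJ x y' := by
  rw [formJ_comm, formJ_add_left, formJ_comm y x, formJ_comm y' x]

end RefineAux

open RefineAux

/-- For `n`-step isotropic flags `F, F'` in `K^{2r}`, the refinement
`F_{i,j} = F_{i-1} + (F_i ∩ F'_j)` (ordered lexicographically in `(i,j)`, `N = 2n+1`)
forms an isotropic partial flag: each `F_{i,j}` with `(i-1)N + j ≤ n(N+1)` is
isotropic, and `(F_{i,j})^⊥ = F_{N+1-i, N-j}`. -/
theorem refinement_isotropic_flag (K : Type*) [Field K] (n r : ℕ)
    (Fl Fl' : IsotropicFlag K n r) :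
    (∀ i j : ℕ, 1 ≤ i → i ≤ 2 * n + 1 → j ≤ 2 * n + 1 →
      (i - 1) * (2 * n + 1) + j ≤ n * (2 * n + 2) →
      ∀ x ∈ refineStep Fl Fl' i j, ∀ y ∈ refineStep Fl Fl' i j, formJ x y = 0) ∧
    (∀ i j : ℕ, 1 ≤ i → i ≤ 2 * n + 1 → 1 ≤ j → j ≤ 2 * n + 1 →
      {x | ∀ y ∈ refineStep Fl Fl' i j, formJ x y = 0}
        = ((refineStep Fl Fl' (2 * n + 1 + 1 - i) (2 * n + 1 - j) :
            Submodule K (Fin (2 * r) → K)) : Set (Fin (2 * r) → K))) := by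
  constructor
  · intro i j hi1 hiN hjN hcond x hx y hy
    have hin : i ≤ n + 1 := by
      by_contra hc
      push_neg at hc
      have h1 : (n + 1) * (2 * n + 1) ≤ (i - 1) * (2 * n + 1) :=
        Nat.mul_le_mul_right _ (by omega)
      nlinarith
    rcases Nat.lt_or_ge i (n + 1) with hlt | hge
    · have hsub : refineStep Fl Fl' i j ≤ Fl.F n :=
        sup_le (Fl.mono (by omega)) (le_trans inf_le_left (Fl.mono (by omega)))
      exact isotropic_Fn Fl (hsub hx) (hsub hy)
    · have hieq : i = n + 1 := le_antisymm hin hge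
      subst hieq
      have hc : n * (2 * n + 1) + j ≤ n * (2 * n + 2) := by simpa using hcond
      have hjn : j ≤ n := by nlinarith
      have hx' : x ∈ Fl.F n ⊔ (Fl.F (n + 1) ⊓ Fl'.F j) := hx
      have hy' : y ∈ Fl.F n ⊔ (Fl.F (n + 1) ⊓ Fl'.F j) := hy
      rcases Submodule.mem_sup.mp hx' with ⟨a, ha, b, hb, rfl⟩
      rcases Submodule.mem_sup.mp hy' with ⟨c, hcm, d, hd, rfl⟩
      rw [formJ_add_left, formJ_add_right, formJ_add_right]
      have t1 : formJ a c = 0 := isotropic_Fn Fl ha hcm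
      have t2 : formJ a d = 0 := by rw [formJ_comm]; exact pair_zero Fl hd.1 ha
      have t3 : formJ b c = 0 := pair_zero Fl hb.1 hcm
      have t4 : formJ b d = 0 :=
        isotropic_Fn Fl' (Fl'.mono hjn hb.2) (Fl'.mono hjn hd.2)
      rw [t1, t2, t3, t4]; ring
  · intro i j hi1 hiN hj1 hjN
    have e1 : (bilinJ K (2 * r)).orthogonal (Fl.F (2 * n + 1 - i)) = Fl.F i := by
      rw [flag_orth Fl (show 2 * n + 1 - i ≤ 2 * n + 1 by omega)]
      congr 1; omega
    have e2 : (bilinJ K (2 * r)).orthogonal (Fl'.F (2 * n + 1 - j)) = Fl'.F j := by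
      rw [flag_orth Fl' (show 2 * n + 1 - j ≤ 2 * n + 1 by omega)]
      congr 1; omega
    have e3 : (bilinJ K (2 * r)).orthogonal (Fl.F i ⊓ Fl'.F j)
        = Fl.F (2 * n + 1 - i) ⊔ Fl'.F (2 * n + 1 - j) := by
      rw [← e1, ← e2, ← orthogonal_sup,
        LinearMap.BilinForm.orthogonal_orthogonal bilinJ_nondeg bilinJ_refl]
    have key : (bilinJ K (2 * r)).orthogonal (refineStep Fl Fl' i j)
        = refineStep Fl Fl' (2 * n + 1 + 1 - i) (2 * n + 1 - j) := by
      have i1 : 2 * n + 1 + 1 - i - 1 = 2 * n + 1 - i := by omega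
      have i2 : 2 * n + 1 + 1 - i = 2 * n + 1 - (i - 1) := by omega
      unfold refineStep
      rw [i1, i2, orthogonal_sup, e3,
        flag_orth Fl (show i - 1 ≤ 2 * n + 1 by omega), inf_comm,
        sup_inf_assoc_of_le _ (Fl.mono (show 2 * n + 1 - i ≤ 2 * n + 1 - (i - 1) by omega)),
        inf_comm]
    rw [← key, orth_coe]
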